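/- Let Psi_n : ℝ → ℝ be a sequence of nondecreasing functions and Psi : ℝ → ℝ a bounded nondecreasing function such that Psi_n(x) → Psi(x) for every x ∈ ℝ. Then the generalized inverse Psi^{-1}(u) = inf{x : Psi(x) >= u} has at most countably many discontinuity points, and at every point u where Psi^{-1} is continuous, Psi_n^{-1}(u) → Psi^{-1}(u). -/

import Mathlib

open Filter

noncomputable def genInv (Ψ : ℝ → ℝ) (u : ℝ) : EReal :=
  sInf ((fun x : ℝ => (x : EReal)) '' {x : ℝ | u ≤ Ψ x})

lemma genInv_mono (Ψ : ℝ → ℝ) : Monotone (genInv Ψ) := by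
  intro u v huv
  apply sInf_le_sInf
  exact Set.image_mono fun x hx => le_trans huv hx

lemma le_genInv {Ψ : ℝ → ℝ} (hΨ : Monotone Ψ) {u x : ℝ} (h : Ψ x < u) :
    (x : EReal) ≤ genInv Ψ u := by
  apply le_sInf
  rintro b ⟨z, hz, rfl⟩
  have hxz : x ≤ z := by
    by_contra hzx
    push_neg at hzx
    exact absurd (le_trans hz (hΨ hzx.le)) (not_le.2 h)
  show (x : EReal) ≤ (z : EReal)
  exact_mod_cast hxz

lemma genInv_le {Ψ : ℝ → ℝ} {u x : ℝ} (h : u ≤ Ψ x) :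
    genInv Ψ u ≤ (x : EReal) :=
  sInf_le ⟨x, h, rfl⟩

theorem stmt8 (Ψn : ℕ → ℝ → ℝ) (Ψ : ℝ → ℝ)
    (hΨn : ∀ n, Monotone (Ψn n)) (hΨ : Monotone Ψ)
    (hbd : ∃ B : ℝ, ∀ x, |Ψ x| ≤ B)
    (hconv : ∀ x, Tendsto (fun n => Ψn n x) atTop (nhds (Ψ x))) :
    {u : ℝ | ¬ ContinuousAt (genInv Ψ) u}.Countable ∧
      ∀ u : ℝ, ContinuousAt (genInv Ψ) u →
        Tendsto (fun n => genInv (Ψn n) u) atTop (nhds (genInv Ψ u)) := by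
  refine ⟨(genInv_mono Ψ).countable_not_continuousAt, fun u hu => ?_⟩
  set c := genInv Ψ u with hc
  -- liminf ≥ c
  have h1 : c ≤ liminf (fun n => genInv (Ψn n) u) atTop := by
    by_contra h
    push_neg at h
    obtain ⟨x, hx1, hx2⟩ := EReal.exists_between_coe_real h
    -- x < c, so Ψ x < u
    have hΨx : Ψ x < u := by
      by_contra h'
      push_neg at h'
      exact absurd (genInv_le h') (not_le.2 hx2)
    have hev : ∀ᶠ n in atTop, Ψn n x < u := (hconv x).eventually_lt_const hΨx
    have : (x : EReal) ≤ liminf (fun n => genInv (Ψn n) u) atTop :=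
      le_liminf_of_le (by isBoundedDefault)
        (by filter_upwards [hev] with n hn; exact le_genInv (hΨn n) hn)
    exact absurd this (not_le.2 hx1)
  -- limsup ≤ c
  have h2 : limsup (fun n => genInv (Ψn n) u) atTop ≤ c := by
    by_contra h
    push_neg at h
    obtain ⟨y, hy1, hy2⟩ := EReal.exists_between_coe_real h
    -- use continuity: find u' > u with genInv Ψ u' < y
    have htends : Tendsto (genInv Ψ) (nhdsWithin u (Set.Ioi u)) (nhds c) :=
      hu.tendsto.mono_left nhdsWithin_le_nhds
    have hev : ∀ᶠ u' in nhdsWithin u (Set.Ioi u), genInv Ψ u' < (y : EReal) :=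
      htends.eventually_lt_const hy1
    obtain ⟨u', hu', hu'mem⟩ := (hev.and eventually_mem_nhdsWithin).exists
    -- genInv Ψ u' < y : get x with u' ≤ Ψ x and x < y
    obtain ⟨b, ⟨x, hx, rfl⟩, hby⟩ := sInf_lt_iff.1 hu'
    have hΨx : u < Ψ x := lt_of_lt_of_le hu'mem hx
    have hevn : ∀ᶠ n in atTop, u < Ψn n x := (hconv x).eventually_const_lt hΨx
    have : limsup (fun n => genInv (Ψn n) u) atTop ≤ (x : EReal) :=
      limsup_le_of_le (by isBoundedDefault)
        (by filter_upwards [hevn] with n hn; exact genInv_le hn.le)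
    exact absurd (lt_of_le_of_lt this hby) (not_lt.2 hy2.le)
  exact tendsto_of_le_liminf_of_limsup_le h1 h2
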